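/- If two linear chord diagrams C and C' on 6k vertices give isomorphic trivalent graphs Γ_C ≅ Γ_{C'} (formed by merging the vertex triples {1,2,3},{4,5,6},...,{6k−2,6k−1,6k} into single trivalent vertices), then the projected invariant tensors agree: p_*(a_C) = p_*(a_{C'}) in Λ^{2k}(Λ³H_ℚ), and the restricted functionals agree: i^*(α_C) = i^*(α_{C'}). -/

import Mathlib

/-- The standard symplectic vector space `H_ℚ = ℚ^{2g}`. -/
abbrev SympVec (g : ℕ) : Type := (Fin g ⊕ Fin g) → ℚ

/-- The standard symplectic form `μ` on `ℚ^{2g}`, given by the matrix `J`. -/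
noncomputable def sympForm (g : ℕ) (u v : SympVec g) : ℚ :=
  dotProduct u (Matrix.mulVec (Matrix.J (Fin g) ℚ) v)

/-- Position `2s` among the `2k` vertices. -/
def posA {k : ℕ} (s : Fin k) : Fin (2 * k) := ⟨2 * s.1, by have := s.isLt; omega⟩

/-- Position `2s+1` among the `2k` vertices. -/
def posB {k : ℕ} (s : Fin k) : Fin (2 * k) := ⟨2 * s.1 + 1, by have := s.isLt; omega⟩

/-- A linear chord diagram on `{1,...,2k}`: a partition into `k` pairs `(i_s, j_s)` with
`i_s < j_s`, recorded canonically (chords listed with increasing first entries) via the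
permutation sending `(1,2,...,2k)` to `(i_1,j_1,...,i_k,j_k)`. -/
abbrev LinearChordDiagram (k : ℕ) : Type :=
  {π : Equiv.Perm (Fin (2 * k)) //
    (∀ s : Fin k, π (posA s) < π (posB s)) ∧
      ∀ s t : Fin k, s < t → π (posA s) < π (posA t)}

/-- The functional `α_C` on pure tensors:
`α_C(u_1 ⊗ ⋯ ⊗ u_{2k}) = sgn C · ∏_s μ(u_{i_s}, u_{j_s})`. -/
noncomputable def alphaFun (g k : ℕ) (C : LinearChordDiagram k)
    (u : Fin (2 * k) → SympVec g) : ℚ :=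
  ((Equiv.Perm.sign C.1 : ℤ) : ℚ) *
    ∏ s : Fin k, sympForm g (u (C.1 (posA s))) (u (C.1 (posB s)))


/-- The basis choice data for placing copies of the symplectic element `ω₀` along the chords:
`chordVec g k π t` is the pure-tensor factor list of the term of `a_C` indexed by `t`. -/
noncomputable def chordVec (g k : ℕ) (π : Equiv.Perm (Fin (2 * k)))
    (t : Fin k → Fin g × Bool) (i : Fin (2 * k)) : SympVec g :=
  let j := π.symm i
  let s : Fin k := ⟨j.1 / 2, by have := j.isLt; omega⟩
  if j.1 % 2 = 0 then
    (if (t s).2 then Pi.single (Sum.inl (t s).1) 1 else Pi.single (Sum.inr (t s).1) 1)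
  else
    (if (t s).2 then Pi.single (Sum.inr (t s).1) 1 else Pi.single (Sum.inl (t s).1) 1)

/-- The sign of the term of `a_C` indexed by `t` (from `ω₀ = Σᵢ xᵢ⊗yᵢ - yᵢ⊗xᵢ`). -/
noncomputable def chordCoeff {g k : ℕ} (t : Fin k → Fin g × Bool) : ℚ :=
  ∏ s : Fin k, (if (t s).2 then 1 else -1)

/-- The wedge `v₁ ∧ ⋯ ∧ v_n` as an element of the `n`-th exterior power `⋀[ℚ]^n M`. -/
noncomputable def wedgePow (M : Type*) [AddCommGroup M] [Module ℚ M] (n : ℕ)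
    (v : Fin n → M) : ⋀[ℚ]^n M :=
  ⟨ExteriorAlgebra.ιMulti ℚ n v, ExteriorAlgebra.ιMulti_range ℚ n (Set.mem_range_self v)⟩

/-- The trivalent-graph vertex (in `Fin 2k`) carrying the chord-diagram position
`i ∈ Fin 6k`: the vertex triples are `{1,2,3},{4,5,6},…`. -/
def vtx {k : ℕ} (i : Fin (2 * (3 * k))) : Fin (2 * k) :=
  ⟨i.1 / 3, by have := i.isLt; omega⟩

/-- First endpoint (as a trivalent-graph vertex) of chord `s` of `C`. -/
def endA {k : ℕ} (C : LinearChordDiagram (3 * k)) (s : Fin (3 * k)) : Fin (2 * k) :=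
  vtx (C.1 (posA s))

/-- Second endpoint (as a trivalent-graph vertex) of chord `s` of `C`. -/
def endB {k : ℕ} (C : LinearChordDiagram (3 * k)) (s : Fin (3 * k)) : Fin (2 * k) :=
  vtx (C.1 (posB s))

/-- Isomorphism of the trivalent graphs `Γ_C ≅ Γ_{C'}` (with vertex set `Fin 2k`, one edge
for each chord): a pair of bijections of vertices and of edges preserving (unordered)
endpoints. -/
def GraphIso {k : ℕ} (C C' : LinearChordDiagram (3 * k)) : Prop :=
  ∃ (e : Equiv.Perm (Fin (2 * k))) (f : Equiv.Perm (Fin (3 * k))),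
    ∀ s : Fin (3 * k),
      (e (endA C s) = endA C' (f s) ∧ e (endB C s) = endB C' (f s)) ∨
      (e (endA C s) = endB C' (f s) ∧ e (endB C s) = endA C' (f s))

/-- The projected invariant tensor `p_*(a_C) ∈ Λ^{2k}(Λ³ H)`: each term of `a_C` is wedged
in consecutive triples, then the `2k` triples are wedged together. -/
noncomputable def paTensor (g k : ℕ) (C : LinearChordDiagram (3 * k)) :
    ⋀[ℚ]^(2 * k) (⋀[ℚ]^3 (SympVec g) : Submodule ℚ (ExteriorAlgebra ℚ (SympVec g))) :=
  ((Equiv.Perm.sign C.1 : ℤ) : ℚ) •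
    ∑ t : Fin (3 * k) → Fin g × Bool, chordCoeff t •
      wedgePow _ (2 * k) (fun sv : Fin (2 * k) =>
        wedgePow (SympVec g) 3 (fun r : Fin 3 =>
          chordVec g (3 * k) C.1 t
            ⟨3 * sv.1 + r.1, by have := sv.isLt; have := r.isLt; omega⟩))

/-- The restricted functional `i^*(α_C)` on `Λ^{2k}(Λ³H)`, evaluated on pure wedges of pure
wedges via the full antisymmetrization `i : Λ^{2k}(Λ³H) → H^{⊗6k}`. -/
noncomputable def iStarAlpha (g k : ℕ) (C : LinearChordDiagram (3 * k))
    (u : Fin (2 * k) → Fin 3 → SympVec g) : ℚ :=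
  ∑ σ : Equiv.Perm (Fin (2 * k)), ∑ τ : Fin (2 * k) → Equiv.Perm (Fin 3),
    (((Equiv.Perm.sign σ : ℤ) : ℚ) *
        ∏ s : Fin (2 * k), ((Equiv.Perm.sign (τ s) : ℤ) : ℚ)) *
      alphaFun g (3 * k) C (fun j : Fin (2 * (3 * k)) =>
        u (σ ⟨j.1 / 3, by have := j.isLt; omega⟩)
          ((τ (σ ⟨j.1 / 3, by have := j.isLt; omega⟩)) ⟨j.1 % 3, by omega⟩))

namespace Aux11
open Equiv Equiv.Perm

def tripEquiv (k : ℕ) : Fin (2 * k) × Fin 3 ≃ Fin (2 * (3 * k)) where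
  toFun p := ⟨3 * p.1.1 + p.2.1, by have := p.1.isLt; have := p.2.isLt; omega⟩
  invFun i := (⟨i.1 / 3, by have := i.isLt; omega⟩, ⟨i.1 % 3, by omega⟩)
  left_inv := by
    rintro ⟨⟨v, hv⟩, ⟨r, hr⟩⟩
    have h1 : (3 * v + r) / 3 = v := by omega
    have h2 : (3 * v + r) % 3 = r := by omega
    simp [h1, h2]
  right_inv := by
    rintro ⟨i, hi⟩
    have : 3 * (i / 3) + i % 3 = i := by omega
    simp [this]

def pairEquiv (n : ℕ) : Fin n × Fin 2 ≃ Fin (2 * n) where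
  toFun p := ⟨2 * p.1.1 + p.2.1, by have := p.1.isLt; have := p.2.isLt; omega⟩
  invFun i := (⟨i.1 / 2, by have := i.isLt; omega⟩, ⟨i.1 % 2, by omega⟩)
  left_inv := by
    rintro ⟨⟨s, hs⟩, ⟨e, he⟩⟩
    have h1 : (2 * s + e) / 2 = s := by omega
    have h2 : (2 * s + e) % 2 = e := by omega
    simp [h1, h2]
  right_inv := by
    rintro ⟨i, hi⟩
    have : 2 * (i / 2) + i % 2 = i := by omega
    simp [this]

lemma vtx_trip {k : ℕ} (v : Fin (2 * k)) (r : Fin 3) : vtx (tripEquiv k (v, r)) = v := by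
  have := r.isLt
  ext
  simp only [vtx, tripEquiv, Equiv.coe_fn_mk]
  omega

lemma trip_symm_fst {k : ℕ} (i : Fin (2 * (3 * k))) : ((tripEquiv k).symm i).1 = vtx i := rfl

lemma pair_zero {n : ℕ} (s : Fin n) : pairEquiv n (s, 0) = posA s := by
  ext; simp [pairEquiv, posA]

lemma pair_one {n : ℕ} (s : Fin n) : pairEquiv n (s, 1) = posB s := by
  ext; simp [pairEquiv, posB]

open Equiv Equiv.Perm in
lemma sign_structured {k : ℕ} (Φ : Perm (Fin (2 * (3 * k)))) (e : Perm (Fin (2 * k)))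
    (ρ : Fin (2 * k) → Perm (Fin 3))
    (h : ∀ v r, Φ (tripEquiv k (v, r)) = tripEquiv k (e v, ρ v r)) :
    sign Φ = sign e ^ 3 * ∏ v, sign (ρ v) := by
  have hconj : sign ((Equiv.prodCongrRight ρ).trans
      (Equiv.prodCongr e (Equiv.refl (Fin 3)))) = sign Φ := by
    apply sign_eq_sign_of_equiv _ _ (tripEquiv k)
    rintro ⟨v, r⟩
    simpa using (h v r).symm
  rw [← hconj]
  have : (Equiv.prodCongrRight ρ).trans (Equiv.prodCongr e (Equiv.refl (Fin 3)))
      = (Equiv.prodCongr e (Equiv.refl (Fin 3))) * (Equiv.prodCongrRight ρ) := rfl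
  rw [this, map_mul]
  have h2 : Equiv.prodCongr e (Equiv.refl (Fin 3))
      = Equiv.prodCongrLeft (fun _ : Fin 3 => e) := by
    ext ⟨v, r⟩ : 1 <;> rfl
  rw [h2, sign_prodCongrLeft, sign_prodCongrRight]
  simp [Finset.prod_const, mul_comm]

lemma sign_structured2 {n : ℕ} (Ψ : Perm (Fin (2 * n))) (f : Perm (Fin n))
    (ρ : Fin n → Perm (Fin 2))
    (h : ∀ s ε, Ψ (pairEquiv n (s, ε)) = pairEquiv n (f s, ρ s ε)) :
    sign Ψ = sign f ^ 2 * ∏ s, sign (ρ s) := by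
  have hconj : sign ((Equiv.prodCongrRight ρ).trans
      (Equiv.prodCongr f (Equiv.refl (Fin 2)))) = sign Ψ := by
    apply sign_eq_sign_of_equiv _ _ (pairEquiv n)
    rintro ⟨s, ε⟩
    simpa using (h s ε).symm
  rw [← hconj]
  have : (Equiv.prodCongrRight ρ).trans (Equiv.prodCongr f (Equiv.refl (Fin 2)))
      = (Equiv.prodCongr f (Equiv.refl (Fin 2))) * (Equiv.prodCongrRight ρ) := rfl
  rw [this, map_mul]
  have h2 : Equiv.prodCongr f (Equiv.refl (Fin 2))
      = Equiv.prodCongrLeft (fun _ : Fin 2 => f) := by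
    ext ⟨v, r⟩ : 1 <;> rfl
  rw [h2, sign_prodCongrLeft, sign_prodCongrRight]
  simp [Finset.prod_const, mul_comm]

lemma sympForm_anti (g : ℕ) (u v : SympVec g) : sympForm g u v = - sympForm g v u := by
  unfold sympForm
  rw [Matrix.dotProduct_mulVec, ← Matrix.mulVec_transpose, Matrix.J_transpose,
    Matrix.neg_mulVec, dotProduct_comm]
  simp [dotProduct_neg]


section Main

variable {k : ℕ} (C C' : LinearChordDiagram (3 * k))
  (e : Perm (Fin (2 * k))) (f : Perm (Fin (3 * k)))

/-- whether the iso flips chord `s`. -/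
def flp (s : Fin (3 * k)) : Bool :=
  !(decide (e (endA C s) = endA C' (f s)) && decide (e (endB C s) = endB C' (f s)))

variable (hef : ∀ s : Fin (3 * k),
      (e (endA C s) = endA C' (f s) ∧ e (endB C s) = endB C' (f s)) ∨
      (e (endA C s) = endB C' (f s) ∧ e (endB C s) = endA C' (f s)))

include hef in
lemma flp_spec (s : Fin (3 * k)) :
    (flp C C' e f s = false ∧ e (endA C s) = endA C' (f s) ∧ e (endB C s) = endB C' (f s)) ∨
    (flp C C' e f s = true ∧ e (endA C s) = endB C' (f s) ∧ e (endB C s) = endA C' (f s)) := by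
  by_cases h : e (endA C s) = endA C' (f s) ∧ e (endB C s) = endB C' (f s)
  · left
    refine ⟨?_, h.1, h.2⟩
    simp [flp, h.1, h.2]
  · right
    rcases hef s with h' | h'
    · exact absurd h' h
    · refine ⟨?_, h'.1, h'.2⟩
      simp only [flp, Bool.not_eq_true', Bool.and_eq_false_iff, decide_eq_false_iff_not]
      tauto

def flipPerm (s : Fin (3 * k)) : Perm (Fin 2) :=
  if flp C C' e f s then Equiv.swap 0 1 else 1

def Ψ : Perm (Fin (2 * (3 * k))) :=
  ((pairEquiv (3 * k)).symm.trans
    ((Equiv.prodCongrRight (flipPerm C C' e f)).trans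
      (Equiv.prodCongr f (Equiv.refl (Fin 2))))).trans (pairEquiv (3 * k))

lemma Psi_apply (s : Fin (3 * k)) (ε : Fin 2) :
    Ψ C C' e f (pairEquiv (3 * k) (s, ε)) = pairEquiv (3 * k) (f s, flipPerm C C' e f s ε) := by
  simp [Ψ]

def Φ : Perm (Fin (2 * (3 * k))) := (C.1.symm.trans (Ψ C C' e f)).trans C'.1

lemma Phi_apply (s : Fin (3 * k)) (ε : Fin 2) :
    Φ C C' e f (C.1 (pairEquiv (3 * k) (s, ε)))
      = C'.1 (pairEquiv (3 * k) (f s, flipPerm C C' e f s ε)) := by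
  simp [Φ, Psi_apply]

include hef in
lemma vtx_Phi (i : Fin (2 * (3 * k))) : vtx (Φ C C' e f i) = e (vtx i) := by
  have hi : C.1 (pairEquiv (3 * k) ((pairEquiv (3 * k)).symm (C.1.symm i))) = i := by simp
  rw [← hi]
  obtain ⟨s, ε⟩ := (pairEquiv (3 * k)).symm (C.1.symm i)
  rw [Phi_apply]
  rcases flp_spec C C' e f hef s with ⟨hf, h1, h2⟩ | ⟨hf, h1, h2⟩ <;>
    simp only [endA, endB] at h1 h2 <;> fin_cases ε <;>
      simp [flipPerm, hf, pair_zero, pair_one, Equiv.swap_apply_left,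
        Equiv.swap_apply_right, h1, h2]

include hef in
lemma rho_inj (v : Fin (2 * k)) :
    Function.Injective (fun r => ((tripEquiv k).symm (Φ C C' e f (tripEquiv k (v, r)))).2) := by
  intro r1 r2 h12
  have hfst : ∀ r : Fin 3,
      ((tripEquiv k).symm (Φ C C' e f (tripEquiv k (v, r)))).1 = e v := by
    intro r
    rw [trip_symm_fst, vtx_Phi C C' e f hef, vtx_trip]
  have : (tripEquiv k).symm (Φ C C' e f (tripEquiv k (v, r1)))
      = (tripEquiv k).symm (Φ C C' e f (tripEquiv k (v, r2))) := by
    apply Prod.ext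
    · rw [hfst r1, hfst r2]
    · exact h12
  have := (tripEquiv k).symm.injective this
  have := (Φ C C' e f).injective this
  have := (tripEquiv k).injective this
  exact (Prod.mk.injEq _ _ _ _ ▸ this).2

/-- The slot permutation at each vertex. -/
noncomputable def rho (v : Fin (2 * k)) : Perm (Fin 3) :=
  Equiv.ofBijective _ (Finite.injective_iff_bijective.mp (rho_inj C C' e f hef v))

include hef in
lemma Phi_trip (v : Fin (2 * k)) (r : Fin 3) :
    Φ C C' e f (tripEquiv k (v, r)) = tripEquiv k (e v, rho C C' e f hef v r) := by
  have hs : (tripEquiv k).symm (Φ C C' e f (tripEquiv k (v, r)))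
      = (e v, rho C C' e f hef v r) := by
    apply Prod.ext
    · rw [trip_symm_fst, vtx_Phi C C' e f hef, vtx_trip]
    · rfl
  calc Φ C C' e f (tripEquiv k (v, r))
      = tripEquiv k ((tripEquiv k).symm (Φ C C' e f (tripEquiv k (v, r)))) := by simp
    _ = tripEquiv k (e v, rho C C' e f hef v r) := by rw [hs]

end Main

lemma sign_algebra (a b c d F P : ℚ) (ha : a * a = 1) (hb : b * b = 1) (hc : c * c = 1)
    (hd : d * d = 1) (hF : F * F = 1) (hP : P * P = 1)
    (hQ : c ^ 3 * P = b * (d ^ 2 * F) * a) : b * F * P * c = a := by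
  rcases mul_self_eq_one_iff.mp ha with rfl | rfl <;>
  rcases mul_self_eq_one_iff.mp hb with rfl | rfl <;>
  rcases mul_self_eq_one_iff.mp hc with rfl | rfl <;>
  rcases mul_self_eq_one_iff.mp hd with rfl | rfl <;>
  rcases mul_self_eq_one_iff.mp hF with rfl | rfl <;>
  rcases mul_self_eq_one_iff.mp hP with rfl | rfl <;>
  (revert hQ; norm_num)

/-- The coercion `ℤˣ →* ℚ`. -/
def sgnHom : ℤˣ →* ℚ := (Int.castRingHom ℚ).toMonoidHom.comp (Units.coeHom ℤ)

lemma sgnHom_apply (u : ℤˣ) : sgnHom u = ((u : ℤ) : ℚ) := rfl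

lemma sgnHom_mul_self {α : Type*} [DecidableEq α] [Fintype α] (σ : Equiv.Perm α) :
    sgnHom (Equiv.Perm.sign σ) * sgnHom (Equiv.Perm.sign σ) = 1 := by
  rw [← map_mul, Int.units_mul_self, map_one]

section Main2
open Equiv Equiv.Perm

variable {k : ℕ} (C C' : LinearChordDiagram (3 * k))
  (e : Perm (Fin (2 * k))) (f : Perm (Fin (3 * k)))
  (hef : ∀ s : Fin (3 * k),
      (e (endA C s) = endA C' (f s) ∧ e (endB C s) = endB C' (f s)) ∨
      (e (endA C s) = endB C' (f s) ∧ e (endB C s) = endA C' (f s)))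

include hef in
lemma key_sign :
    ((sign C'.1 : ℤ) : ℚ) * (∏ s, ((sign (flipPerm C C' e f s) : ℤ) : ℚ))
        * (∏ v, ((sign (rho C C' e f hef v) : ℤ) : ℚ)) * ((sign e : ℤ) : ℚ)
      = ((sign C.1 : ℤ) : ℚ) := by
  have h1 : sign (Φ C C' e f) = sign e ^ 3 * ∏ v, sign (rho C C' e f hef v) :=
    sign_structured _ e _ (Phi_trip C C' e f hef)
  have h3 : sign (Φ C C' e f) = sign C'.1 * (sign (Ψ C C' e f) * sign C.1) := by
    have hφ : Φ C C' e f = C'.1 * (Ψ C C' e f * C.1⁻¹) := rfl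
    rw [hφ, map_mul, map_mul, sign_inv]
  rw [sign_structured2 _ f _ (Psi_apply C C' e f)] at h3
  have hZ : sign e ^ 3 * ∏ v, sign (rho C C' e f hef v)
      = sign C'.1 * ((sign f ^ 2 * ∏ s, sign (flipPerm C C' e f s)) * sign C.1) :=
    h1.symm.trans h3
  have hQ := congrArg sgnHom hZ
  simp only [map_mul, map_pow, map_prod] at hQ
  simp only [sgnHom_apply] at hQ ⊢
  apply sign_algebra _ _ _ ((sign f : ℤ) : ℚ) _ _
    (sgnHom_mul_self C.1) (sgnHom_mul_self C'.1) (sgnHom_mul_self e) (sgnHom_mul_self f)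
    ?_ ?_ ?_
  · rw [← Finset.prod_mul_distrib]
    exact Finset.prod_eq_one fun s _ => sgnHom_mul_self _
  · rw [← Finset.prod_mul_distrib]
    exact Finset.prod_eq_one fun v _ => sgnHom_mul_self _
  · simp only [sgnHom_apply]
    linear_combination hQ

end Main2

noncomputable def bsel (g : ℕ) (p : Fin g × Bool) (ε : Fin 2) : SympVec g :=
  if ε.1 = 0 then
    (if p.2 then Pi.single (Sum.inl p.1) 1 else Pi.single (Sum.inr p.1) 1)
  else
    (if p.2 then Pi.single (Sum.inr p.1) 1 else Pi.single (Sum.inl p.1) 1)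

lemma chordVec_def (g n : ℕ) (π : Equiv.Perm (Fin (2 * n))) (t : Fin n → Fin g × Bool)
    (i : Fin (2 * n)) :
    chordVec g n π t i
      = bsel g (t ((pairEquiv n).symm (π.symm i)).1) ((pairEquiv n).symm (π.symm i)).2 := rfl

lemma chordVec_pair (g n : ℕ) (π : Equiv.Perm (Fin (2 * n))) (t : Fin n → Fin g × Bool)
    (s : Fin n) (ε : Fin 2) :
    chordVec g n π t (π (pairEquiv n (s, ε))) = bsel g (t s) ε := by
  rw [chordVec_def]
  simp

lemma bsel_flip (g : ℕ) (p : Fin g × Bool) (c : Bool) (ε : Fin 2) :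
    bsel g (p.1, xor p.2 c) ((if c then Equiv.swap (0 : Fin 2) 1 else 1) ε) = bsel g p ε := by
  rcases p with ⟨a, b⟩
  cases c <;> cases b <;> fin_cases ε <;>
    simp [bsel, Equiv.swap_apply_left, Equiv.swap_apply_right]

section Main3
open Equiv Equiv.Perm

variable {k : ℕ} (g : ℕ) (C C' : LinearChordDiagram (3 * k))
  (e : Perm (Fin (2 * k))) (f : Perm (Fin (3 * k)))

/-- The relabeling of the `t`-data along the graph isomorphism. -/
def Tmap : (Fin (3 * k) → Fin g × Bool) ≃ (Fin (3 * k) → Fin g × Bool) where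
  toFun t s' := ((t (f.symm s')).1, xor (t (f.symm s')).2 (flp C C' e f (f.symm s')))
  invFun t' s := ((t' (f s)).1, xor (t' (f s)).2 (flp C C' e f s))
  left_inv t := by
    funext s
    simp [Bool.xor_assoc]
  right_inv t' := by
    funext s'
    simp [Bool.xor_assoc]

lemma Tmap_f (t : Fin (3 * k) → Fin g × Bool) (s : Fin (3 * k)) :
    Tmap g C C' e f t (f s) = ((t s).1, xor (t s).2 (flp C C' e f s)) := by
  simp [Tmap]

lemma vecmatch (t : Fin (3 * k) → Fin g × Bool) (i : Fin (2 * (3 * k))) :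
    chordVec g (3 * k) C'.1 (Tmap g C C' e f t) (Φ C C' e f i)
      = chordVec g (3 * k) C.1 t i := by
  have hi : C.1 (pairEquiv (3 * k) ((pairEquiv (3 * k)).symm (C.1.symm i))) = i := by simp
  rw [← hi]
  obtain ⟨s, ε⟩ := (pairEquiv (3 * k)).symm (C.1.symm i)
  rw [Phi_apply, chordVec_pair, chordVec_pair, Tmap_f]
  have : flipPerm C C' e f s = if flp C C' e f s then Equiv.swap (0 : Fin 2) 1 else 1 := rfl
  rw [this]
  exact bsel_flip g (t s) (flp C C' e f s) ε

lemma Tmap_coeff (t : Fin (3 * k) → Fin g × Bool) :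
    (∏ s : Fin (3 * k), (if (Tmap g C C' e f t s).2 then (1 : ℚ) else -1))
      = (∏ s : Fin (3 * k), ((sign (flipPerm C C' e f s) : ℤ) : ℚ))
        * ∏ s : Fin (3 * k), (if (t s).2 then (1 : ℚ) else -1) := by
  rw [← Finset.prod_mul_distrib, ← Equiv.prod_comp f
    (fun s' => (if (Tmap g C C' e f t s').2 then (1 : ℚ) else -1))]
  apply Finset.prod_congr rfl
  intro s _
  rw [Tmap_f]
  have h0 : ((0 : Fin 2)) ≠ 1 := by decide
  cases hc : flp C C' e f s <;> cases hb : (t s).2 <;>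
    simp [flipPerm, hc, sign_swap h0]

end Main3

noncomputable def WW (g : ℕ) {k : ℕ} (C : LinearChordDiagram (3 * k))
    (t : Fin (3 * k) → Fin g × Bool) :
    ⋀[ℚ]^(2 * k) (⋀[ℚ]^3 (SympVec g) : Submodule ℚ (ExteriorAlgebra ℚ (SympVec g))) :=
  wedgePow _ (2 * k) (fun v : Fin (2 * k) =>
    wedgePow (SympVec g) 3 (fun r : Fin 3 =>
      chordVec g (3 * k) C.1 t (tripEquiv k (v, r))))

lemma paTensor_eq (g k : ℕ) (C : LinearChordDiagram (3 * k)) :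
    paTensor g k C
      = ((Equiv.Perm.sign C.1 : ℤ) : ℚ) • ∑ t : Fin (3 * k) → Fin g × Bool,
          chordCoeff t • WW g C t := rfl

lemma wedgePow_perm (M : Type*) [AddCommGroup M] [Module ℚ M] (n : ℕ)
    (v : Fin n → M) (σ : Equiv.Perm (Fin n)) :
    wedgePow M n (fun i => v (σ i)) = ((Equiv.Perm.sign σ : ℤ) : ℚ) • wedgePow M n v := by
  refine Subtype.ext ?_
  show (ExteriorAlgebra.ιMulti ℚ n) (v ∘ σ)
    = (((Equiv.Perm.sign σ : ℤ) : ℚ) • wedgePow M n v : ⋀[ℚ]^n M).1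
  rw [AlternatingMap.map_perm, Units.smul_def, ← Int.cast_smul_eq_zsmul ℚ]
  rfl

lemma wedgePow_smul_univ (M : Type*) [AddCommGroup M] [Module ℚ M] (n : ℕ)
    (c : Fin n → ℚ) (v : Fin n → M) :
    wedgePow M n (fun i => c i • v i) = (∏ i, c i) • wedgePow M n v := by
  refine Subtype.ext ?_
  show (ExteriorAlgebra.ιMulti ℚ n).toMultilinearMap (fun i => c i • v i)
    = ((∏ i, c i) • wedgePow M n v : ⋀[ℚ]^n M).1
  rw [MultilinearMap.map_smul_univ]
  rfl

section Final
open Equiv Equiv.Perm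

variable {k : ℕ} (g : ℕ) (C C' : LinearChordDiagram (3 * k))
  (e : Perm (Fin (2 * k))) (f : Perm (Fin (3 * k)))
  (hef : ∀ s : Fin (3 * k),
      (e (endA C s) = endA C' (f s) ∧ e (endB C s) = endB C' (f s)) ∨
      (e (endA C s) = endB C' (f s) ∧ e (endB C s) = endA C' (f s)))

lemma wedgePow_comp_smul (M : Type*) [AddCommGroup M] [Module ℚ M] (n : ℕ)
    (c : Fin n → ℚ) (v : Fin n → M) (σ : Equiv.Perm (Fin n)) :
    wedgePow M n (fun i => c i • v (σ i))
      = ((∏ i, c i) * ((Equiv.Perm.sign σ : ℤ) : ℚ)) • wedgePow M n v := by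
  refine Eq.trans (wedgePow_smul_univ M n c (fun i => v (σ i))) ?_
  rw [wedgePow_perm M n v σ, smul_smul]

include hef in
lemma WW_eq (t : Fin (3 * k) → Fin g × Bool) :
    WW g C' (Tmap g C C' e f t)
      = ((∏ v, ((sign (rho C C' e f hef v) : ℤ) : ℚ)) * ((sign e : ℤ) : ℚ)) • WW g C t := by
  have h2 : ∀ v' : Fin (2 * k),
      wedgePow (SympVec g) 3 (fun r' : Fin 3 =>
          chordVec g (3 * k) C'.1 (Tmap g C C' e f t) (tripEquiv k (v', r')))
        = ((sign (rho C C' e f hef (e.symm v')) : ℤ) : ℚ) •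
            wedgePow (SympVec g) 3 (fun r : Fin 3 =>
              chordVec g (3 * k) C.1 t (tripEquiv k (e.symm v', r))) := by
    intro v'
    have hfun : (fun r' : Fin 3 =>
        chordVec g (3 * k) C'.1 (Tmap g C C' e f t) (tripEquiv k (v', r')))
        = fun r' : Fin 3 => chordVec g (3 * k) C.1 t
            (tripEquiv k (e.symm v', (rho C C' e f hef (e.symm v')).symm r')) := by
      funext r'
      rw [← vecmatch g C C' e f t
        (tripEquiv k (e.symm v', (rho C C' e f hef (e.symm v')).symm r'))]
      congr 1
      rw [Phi_trip C C' e f hef]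
      simp
    have hp := wedgePow_perm (SympVec g) 3
      (fun r : Fin 3 => chordVec g (3 * k) C.1 t (tripEquiv k (e.symm v', r)))
      (rho C C' e f hef (e.symm v')).symm
    rw [hfun]
    refine Eq.trans hp ?_
    have hss : (sign (rho C C' e f hef (e.symm v')).symm : ℤˣ)
        = sign (rho C C' e f hef (e.symm v')) := by
      have : (rho C C' e f hef (e.symm v')).symm = (rho C C' e f hef (e.symm v'))⁻¹ := rfl
      rw [this, sign_inv]
    rw [hss]
  refine Eq.trans (congrArg (wedgePow _ (2 * k)) (funext h2)) ?_
  refine Eq.trans (wedgePow_comp_smul _ (2 * k)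
    (fun v' => ((sign (rho C C' e f hef (e.symm v')) : ℤ) : ℚ))
    (fun v : Fin (2 * k) => wedgePow (SympVec g) 3 (fun r : Fin 3 =>
      chordVec g (3 * k) C.1 t (tripEquiv k (v, r)))) e.symm) ?_
  refine congrArg (fun a : ℚ => a • WW g C t) ?_
  rw [Equiv.prod_comp e.symm (fun v => ((sign (rho C C' e f hef v) : ℤ) : ℚ))]
  have : e.symm = e⁻¹ := rfl
  rw [this, sign_inv]

lemma chordCoeff_def (t : Fin (3 * k) → Fin g × Bool) :
    chordCoeff t = ∏ s : Fin (3 * k), (if (t s).2 then (1 : ℚ) else -1) := rfl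

set_option synthInstance.maxHeartbeats 1000000 in
set_option maxHeartbeats 2000000 in
include hef in
lemma part1 : paTensor g k C = paTensor g k C' := by
  rw [paTensor_eq g k C]
  rw [paTensor_eq g k C']
  rw [← Equiv.sum_comp (Tmap g C C' e f) (fun t => chordCoeff t • WW g C' t)]
  rw [Finset.smul_sum]
  rw [Finset.smul_sum]
  apply Finset.sum_congr rfl
  intro t _
  rw [WW_eq g C C' e f hef t]
  have hc : chordCoeff (Tmap g C C' e f t)
      = (∏ s : Fin (3 * k), ((sign (flipPerm C C' e f s) : ℤ) : ℚ)) * chordCoeff t := by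
    rw [chordCoeff_def, chordCoeff_def, Tmap_coeff]
  rw [hc, smul_smul, smul_smul, smul_smul]
  refine congrArg (fun a : ℚ => a • WW g C t) ?_
  have hk := key_sign C C' e f hef
  linear_combination (-(chordCoeff t)) * hk

end Final

/-- `j ↦ j mod 3` as an element of `Fin 3`. -/
def finMod3 {k : ℕ} (j : Fin (2 * (3 * k))) : Fin 3 := ⟨j.1 % 3, by omega⟩

lemma finMod3_trip {k : ℕ} (v : Fin (2 * k)) (r : Fin 3) :
    finMod3 (tripEquiv k (v, r)) = r := by
  have := r.isLt
  apply Fin.ext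
  simp only [finMod3, tripEquiv, Equiv.coe_fn_mk]
  omega

/-- The rearranged vector family appearing in `iStarAlpha`. -/
noncomputable def wfun (g : ℕ) {k : ℕ} (u : Fin (2 * k) → Fin 3 → SympVec g)
    (σ : Equiv.Perm (Fin (2 * k))) (τ : Fin (2 * k) → Equiv.Perm (Fin 3)) :
    Fin (2 * (3 * k)) → SympVec g :=
  fun j => u (σ (vtx j)) ((τ (σ (vtx j))) (finMod3 j))

lemma wfun_apply (g : ℕ) {k : ℕ} (u : Fin (2 * k) → Fin 3 → SympVec g)
    (σ : Equiv.Perm (Fin (2 * k))) (τ : Fin (2 * k) → Equiv.Perm (Fin 3))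
    (v : Fin (2 * k)) (r : Fin 3) :
    wfun g u σ τ (tripEquiv k (v, r)) = u (σ v) (τ (σ v) r) := by
  unfold wfun
  rw [vtx_trip, finMod3_trip]

section Final2
open Equiv Equiv.Perm

variable {k : ℕ} (g : ℕ) (C C' : LinearChordDiagram (3 * k))
  (e : Perm (Fin (2 * k))) (f : Perm (Fin (3 * k)))
  (hef : ∀ s : Fin (3 * k),
      (e (endA C s) = endA C' (f s) ∧ e (endB C s) = endB C' (f s)) ∨
      (e (endA C s) = endB C' (f s) ∧ e (endB C s) = endA C' (f s)))

lemma iStarAlpha_eq (u : Fin (2 * k) → Fin 3 → SympVec g) :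
    iStarAlpha g k C u
      = ∑ σ : Perm (Fin (2 * k)), ∑ τ : Fin (2 * k) → Perm (Fin 3),
          (((sign σ : ℤ) : ℚ) * ∏ v : Fin (2 * k), ((sign (τ v) : ℤ) : ℚ)) *
            alphaFun g (3 * k) C (wfun g u σ τ) := rfl

lemma alphaFun_eq (u : Fin (2 * (3 * k)) → SympVec g) :
    alphaFun g (3 * k) C u
      = ((sign C.1 : ℤ) : ℚ) *
          ∏ s : Fin (3 * k), sympForm g (u (C.1 (posA s))) (u (C.1 (posB s))) := rfl

include hef in
lemma wfun_comp (u : Fin (2 * k) → Fin 3 → SympVec g) (σ : Perm (Fin (2 * k)))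
    (τ : Fin (2 * k) → Perm (Fin 3)) (j : Fin (2 * (3 * k))) :
    wfun g u (σ * e⁻¹) (fun m => τ m * (rho C C' e f hef (σ.symm m))⁻¹) (Φ C C' e f j)
      = wfun g u σ τ j := by
  have hj : tripEquiv k ((tripEquiv k).symm j) = j := by simp
  rw [← hj]
  obtain ⟨v, r⟩ := (tripEquiv k).symm j
  rw [Phi_trip C C' e f hef, wfun_apply, wfun_apply]
  have h1 : (σ * e⁻¹) (e v) = σ v := by simp
  rw [h1]
  have h2 : (τ (σ v) * (rho C C' e f hef (σ.symm (σ v)))⁻¹) (rho C C' e f hef v r)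
      = τ (σ v) r := by simp
  rw [h2]

lemma sq_flip (s : Fin (3 * k)) :
    ((sign (flipPerm C C' e f s) : ℤ) : ℚ) = if flp C C' e f s then -1 else 1 := by
  have h0 : ((0 : Fin 2)) ≠ 1 := by decide
  cases hc : flp C C' e f s <;> simp [flipPerm, hc, sign_swap h0]

include hef in
lemma alpha_comp (u : Fin (2 * k) → Fin 3 → SympVec g) (σ : Perm (Fin (2 * k)))
    (τ : Fin (2 * k) → Perm (Fin 3)) :
    alphaFun g (3 * k) C'
        (wfun g u (σ * e⁻¹) (fun m => τ m * (rho C C' e f hef (σ.symm m))⁻¹))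
      = ((sign C'.1 : ℤ) : ℚ) * ((∏ s, ((sign (flipPerm C C' e f s) : ℤ) : ℚ)) *
          ∏ s : Fin (3 * k), sympForm g (wfun g u σ τ (C.1 (posA s)))
            (wfun g u σ τ (C.1 (posB s)))) := by
  rw [alphaFun_eq]
  congr 1
  rw [← Equiv.prod_comp f (fun s' : Fin (3 * k) =>
    sympForm g
      (wfun g u (σ * e⁻¹) (fun m => τ m * (rho C C' e f hef (σ.symm m))⁻¹) (C'.1 (posA s')))
      (wfun g u (σ * e⁻¹) (fun m => τ m * (rho C C' e f hef (σ.symm m))⁻¹) (C'.1 (posB s')))),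
    ← Finset.prod_mul_distrib]
  apply Finset.prod_congr rfl
  intro s _
  rw [sq_flip]
  cases hc : flp C C' e f s
  · have e0 : C'.1 (posA (f s)) = Φ C C' e f (C.1 (pairEquiv (3 * k) (s, 0))) := by
      rw [Phi_apply, show flipPerm C C' e f s (0 : Fin 2) = 0 from by simp [flipPerm, hc],
        pair_zero]
    have e1 : C'.1 (posB (f s)) = Φ C C' e f (C.1 (pairEquiv (3 * k) (s, 1))) := by
      rw [Phi_apply, show flipPerm C C' e f s (1 : Fin 2) = 1 from by simp [flipPerm, hc],
        pair_one]
    rw [e0, e1, wfun_comp g C C' e f hef, wfun_comp g C C' e f hef, pair_zero, pair_one]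
    norm_num
  · have e0 : C'.1 (posA (f s)) = Φ C C' e f (C.1 (pairEquiv (3 * k) (s, 1))) := by
      rw [Phi_apply, show flipPerm C C' e f s (1 : Fin 2) = 0 from by
        simp [flipPerm, hc, Equiv.swap_apply_right], pair_zero]
    have e1 : C'.1 (posB (f s)) = Φ C C' e f (C.1 (pairEquiv (3 * k) (s, 0))) := by
      rw [Phi_apply, show flipPerm C C' e f s (0 : Fin 2) = 1 from by
        simp [flipPerm, hc, Equiv.swap_apply_left], pair_one]
    rw [e0, e1, wfun_comp g C C' e f hef, wfun_comp g C C' e f hef, pair_zero, pair_one,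
      sympForm_anti]
    norm_num

set_option maxHeartbeats 2000000 in
set_option synthInstance.maxHeartbeats 1000000 in
include hef in
lemma part2 (u : Fin (2 * k) → Fin 3 → SympVec g) :
    iStarAlpha g k C u = iStarAlpha g k C' u := by
  rw [iStarAlpha_eq g C u, iStarAlpha_eq g C' u]
  rw [← Equiv.sum_comp (Equiv.mulRight e⁻¹)
    (fun σ' : Perm (Fin (2 * k)) => ∑ τ' : Fin (2 * k) → Perm (Fin 3),
      (((sign σ' : ℤ) : ℚ) * ∏ v : Fin (2 * k), ((sign (τ' v) : ℤ) : ℚ)) *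
        alphaFun g (3 * k) C' (wfun g u σ' τ'))]
  apply Finset.sum_congr rfl
  intro σ _
  rw [show Equiv.mulRight e⁻¹ σ = σ * e⁻¹ from rfl]
  rw [← Equiv.sum_comp (Equiv.piCongrRight
      (fun m : Fin (2 * k) => Equiv.mulRight ((rho C C' e f hef (σ.symm m))⁻¹)))
    (fun τ' : Fin (2 * k) → Perm (Fin 3) =>
      (((sign (σ * e⁻¹) : ℤ) : ℚ) * ∏ v : Fin (2 * k), ((sign (τ' v) : ℤ) : ℚ)) *
        alphaFun g (3 * k) C' (wfun g u (σ * e⁻¹) τ'))]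
  apply Finset.sum_congr rfl
  intro τ _
  rw [show (Equiv.piCongrRight
      (fun m : Fin (2 * k) => Equiv.mulRight ((rho C C' e f hef (σ.symm m))⁻¹))) τ
    = fun m => τ m * (rho C C' e f hef (σ.symm m))⁻¹ from rfl]
  rw [alpha_comp g C C' e f hef u σ τ, alphaFun_eq]
  have hsig : ((sign (σ * e⁻¹) : ℤ) : ℚ) = ((sign σ : ℤ) : ℚ) * ((sign e : ℤ) : ℚ) := by
    rw [map_mul, sign_inv]
    push_cast [Units.val_mul]
    ring
  have htau : (∏ v : Fin (2 * k),
        ((sign (τ v * (rho C C' e f hef (σ.symm v))⁻¹) : ℤ) : ℚ))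
      = (∏ v : Fin (2 * k), ((sign (τ v) : ℤ) : ℚ))
        * ∏ v : Fin (2 * k), ((sign (rho C C' e f hef v) : ℤ) : ℚ) := by
    have hpt : ∀ v : Fin (2 * k), ((sign (τ v * (rho C C' e f hef (σ.symm v))⁻¹) : ℤ) : ℚ)
        = ((sign (τ v) : ℤ) : ℚ) * ((sign (rho C C' e f hef (σ.symm v)) : ℤ) : ℚ) := by
      intro v
      rw [map_mul, sign_inv]
      push_cast [Units.val_mul]
      ring
    calc ∏ v : Fin (2 * k), ((sign (τ v * (rho C C' e f hef (σ.symm v))⁻¹) : ℤ) : ℚ)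
        = ∏ v : Fin (2 * k),
            ((sign (τ v) : ℤ) : ℚ) * ((sign (rho C C' e f hef (σ.symm v)) : ℤ) : ℚ) :=
          Finset.prod_congr rfl (fun v _ => hpt v)
      _ = (∏ v : Fin (2 * k), ((sign (τ v) : ℤ) : ℚ))
            * ∏ v : Fin (2 * k), ((sign (rho C C' e f hef (σ.symm v)) : ℤ) : ℚ) :=
          Finset.prod_mul_distrib
      _ = _ := by
          rw [Equiv.prod_comp σ.symm (fun v => ((sign (rho C C' e f hef v) : ℤ) : ℚ))]
  rw [hsig, htau]
  have hk := key_sign C C' e f hef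
  linear_combination (-(((sign σ : ℤ) : ℚ) * (∏ v : Fin (2 * k), ((sign (τ v) : ℤ) : ℚ))
    * ∏ s : Fin (3 * k), sympForm g (wfun g u σ τ (C.1 (posA s)))
        (wfun g u σ τ (C.1 (posB s))))) * hk

end Final2

end Aux11

/-- if two linear chord diagrams on `6k` vertices have isomorphic trivalent
graphs, then the projected invariant tensors `p_*(a_C)` in `Λ^{2k}(Λ³H)` agree, and the
restricted functionals `i^*(α_C)` agree. -/
theorem paTensor_eq_of_graphIso (g k : ℕ) (C C' : LinearChordDiagram (3 * k))
    (h : GraphIso C C') :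
    paTensor g k C = paTensor g k C' ∧
    ∀ u : Fin (2 * k) → Fin 3 → SympVec g, iStarAlpha g k C u = iStarAlpha g k C' u := by
  obtain ⟨e, f, hef⟩ := h
  exact ⟨Aux11.part1 g C C' e f hef, fun u => Aux11.part2 g C C' e f hef u⟩
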